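/- For finite-horizon Markov Games: if π^E is a weak Dominant Strategy Equilibrium and the learned product policy π has time-uniform BC error ε_BC, then NashGap(π) ≤ 2n·ε_BC·H². -/

import Mathlib

open scoped BigOperators

namespace FH

/-- Finite-horizon `n`-player Markov Game with horizon `H` and time-dependent
rewards. -/
structure Game (n : ℕ) (S : Type) (A : Fin n → Type) [Fintype S] [∀ i, Fintype (A i)] where
  P : S → (∀ i, A i) → S → ℝ
  r : Fin n → ℕ → S → (∀ i, A i) → ℝ
  ν₀ : S → ℝ
  H : ℕ

variable {n : ℕ} {S : Type} {A : Fin n → Type} [Fintype S] [∀ i, Fintype (A i)]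

/-- A non-stationary policy: a distribution over actions at each time and state. -/
def IsPol {B : Type} [Fintype B] (π : ℕ → S → B → ℝ) : Prop :=
  (∀ t s b, 0 ≤ π t s b) ∧ ∀ t s, ∑ b, π t s b = 1

/-- Validity of the game data: `ν₀` a distribution, `P` a kernel, rewards in `[-1,1]`. -/
def IsGame (G : Game n S A) : Prop :=
  (∀ s, 0 ≤ G.ν₀ s) ∧ (∑ s, G.ν₀ s = 1) ∧
    (∀ s a, (∀ s', 0 ≤ G.P s a s') ∧ ∑ s', G.P s a s' = 1) ∧
    (∀ i t s a, |G.r i t s a| ≤ 1)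

/-- Joint (product) non-stationary policy. -/
def joint (π : ∀ i, ℕ → S → A i → ℝ) : ℕ → S → (∀ i, A i) → ℝ :=
  fun t s a => ∏ i, π i t s (a i)

/-- `stateDist G π t s = P(s_t = s)` (the time-`t` state visitation, `μ^t_π`). -/
def stateDist (G : Game n S A) (π : ℕ → S → (∀ i, A i) → ℝ) : ℕ → S → ℝ
  | 0 => G.ν₀
  | t + 1 => fun s' => ∑ s : S, ∑ a : (∀ i, A i), stateDist G π t s * π t s a * G.P s a s'

/-- Value-to-go with `k` remaining steps starting at time `t` in state `s`. -/
def Vaux (G : Game n S A) (i : Fin n) (π : ℕ → S → (∀ i, A i) → ℝ) :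
    ℕ → ℕ → S → ℝ
  | 0, _, _ => 0
  | k + 1, t, s => ∑ a : (∀ i, A i), π t s a *
      (G.r i t s a + ∑ s' : S, G.P s a s' * Vaux G i π k (t + 1) s')

/-- `V_{i,t}^π(s)`: expected cumulative reward from time `t` to `H-1` given `s_t = s`. -/
def Vt (G : Game n S A) (i : Fin n) (π : ℕ → S → (∀ i, A i) → ℝ)
    (t : ℕ) (s : S) : ℝ :=
  Vaux G i π (G.H - t) t s

/-- `V_i^π(ν₀)`. -/
def value (G : Game n S A) (i : Fin n) (π : ℕ → S → (∀ i, A i) → ℝ) : ℝ :=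
  ∑ s : S, G.ν₀ s * Vt G i π 0 s

/-- `Q_{i,t}^π(s,a) = r_i^t(s,a) + ∑_{s'} P(s'|s,a) V_{i,t+1}^π(s')`. -/
def Qt (G : Game n S A) (i : Fin n) (π : ℕ → S → (∀ i, A i) → ℝ)
    (t : ℕ) (s : S) (a : ∀ i, A i) : ℝ :=
  G.r i t s a + ∑ s' : S, G.P s a s' * Vt G i π (t + 1) s'

/-- Unilateral deviation of player `i` to `πi'`. -/
def dev (π : ∀ i, ℕ → S → A i → ℝ) (i : Fin n) (πi' : ℕ → S → A i → ℝ) :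
    ∀ j, ℕ → S → A j → ℝ :=
  Function.update π i πi'

/-- Time-`t` behavioral cloning error of player `i`:
`E_{s ∼ μ^t_{π^E}} ‖π_{i,t}(·|s) − π^E_{i,t}(·|s)‖₁`. -/
def bcErrT (G : Game n S A) (πE π : ∀ i, ℕ → S → A i → ℝ)
    (i : Fin n) (t : ℕ) : ℝ :=
  ∑ s : S, stateDist G (joint πE) t s * ∑ b : A i, |π i t s b - πE i t s b|

end FH

namespace FH

variable {n : ℕ} {S : Type} {A : Fin n → Type} [Fintype S] [∀ i, Fintype (A i)]

/-- Sum over a pi type of a product factorizes. -/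
lemma sum_pi_prod (f : ∀ i, A i → ℝ) :
    ∑ a : ∀ i, A i, ∏ i, f i (a i) = ∏ i, ∑ b, f i b :=
  (Fintype.prod_sum f).symm

lemma joint_nonneg {π : ∀ i, ℕ → S → A i → ℝ} (hπ : ∀ i, IsPol (π i))
    (t : ℕ) (s : S) (a : ∀ i, A i) : 0 ≤ joint π t s a :=
  Finset.prod_nonneg fun i _ => (hπ i).1 t s (a i)

lemma joint_sum_one {π : ∀ i, ℕ → S → A i → ℝ} (hπ : ∀ i, IsPol (π i))
    (t : ℕ) (s : S) : ∑ a : ∀ i, A i, joint π t s a = 1 := by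
  unfold joint
  rw [sum_pi_prod]
  simp [(fun i => (hπ i).2 t s : ∀ i, ∑ b, π i t s b = 1)]

/-- Total variation of a product distribution is subadditive in coordinates. -/
lemma tv_prod_le (p q : ∀ i, A i → ℝ)
    (hp0 : ∀ i b, 0 ≤ p i b) (hq0 : ∀ i b, 0 ≤ q i b)
    (hp1 : ∀ i, ∑ b, p i b = 1) (hq1 : ∀ i, ∑ b, q i b = 1) :
    ∑ a : ∀ i, A i, |(∏ i, p i (a i)) - ∏ i, q i (a i)| ≤
      ∑ i, ∑ b, |p i b - q i b| := by
  have key : ∀ s : Finset (Fin n),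
      ∑ a : ∀ i, A i, (∏ j ∈ sᶜ, p j (a j)) *
          |(∏ j ∈ s, p j (a j)) - ∏ j ∈ s, q j (a j)| ≤
        ∑ j ∈ s, ∑ b, |p j b - q j b| := by
    intro s
    induction s using Finset.induction_on with
    | empty => simp
    | @insert k s hk ih =>
      have hstep : ∀ a : ∀ i, A i,
          (∏ j ∈ (insert k s)ᶜ, p j (a j)) *
            |(∏ j ∈ insert k s, p j (a j)) - ∏ j ∈ insert k s, q j (a j)| ≤
          (∏ j ∈ sᶜ, p j (a j)) * |(∏ j ∈ s, p j (a j)) - ∏ j ∈ s, q j (a j)| +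
          (∏ j ∈ (insert k s)ᶜ, p j (a j)) * (|p k (a k) - q k (a k)| *
            ∏ j ∈ s, q j (a j)) := by
        intro a
        have hkc : k ∈ sᶜ := Finset.mem_compl.2 hk
        have hPc : (∏ j ∈ sᶜ, p j (a j)) =
            p k (a k) * ∏ j ∈ (insert k s)ᶜ, p j (a j) := by
          rw [Finset.compl_insert]
          exact (Finset.mul_prod_erase _ _ hkc).symm
        rw [Finset.prod_insert hk, Finset.prod_insert hk, hPc]
        have hW : (0:ℝ) ≤ ∏ j ∈ (insert k s)ᶜ, p j (a j) :=
          Finset.prod_nonneg fun j _ => hp0 j (a j)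
        have habs : |p k (a k) * ∏ j ∈ s, p j (a j) -
            q k (a k) * ∏ j ∈ s, q j (a j)| ≤
            p k (a k) * |(∏ j ∈ s, p j (a j)) - ∏ j ∈ s, q j (a j)| +
            |p k (a k) - q k (a k)| * ∏ j ∈ s, q j (a j) := by
          have h1 : p k (a k) * ∏ j ∈ s, p j (a j) -
              q k (a k) * ∏ j ∈ s, q j (a j) =
              p k (a k) * ((∏ j ∈ s, p j (a j)) - ∏ j ∈ s, q j (a j)) +
              (p k (a k) - q k (a k)) * ∏ j ∈ s, q j (a j) := by ring
          rw [h1]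
          refine (abs_add_le _ _).trans ?_
          rw [abs_mul, abs_mul, abs_of_nonneg (hp0 k (a k)),
            abs_of_nonneg (Finset.prod_nonneg fun j _ => hq0 j (a j))]
        calc (∏ j ∈ (insert k s)ᶜ, p j (a j)) *
              |p k (a k) * ∏ j ∈ s, p j (a j) -
                q k (a k) * ∏ j ∈ s, q j (a j)|
            ≤ (∏ j ∈ (insert k s)ᶜ, p j (a j)) *
              (p k (a k) * |(∏ j ∈ s, p j (a j)) - ∏ j ∈ s, q j (a j)| +
               |p k (a k) - q k (a k)| * ∏ j ∈ s, q j (a j)) :=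
              mul_le_mul_of_nonneg_left habs hW
          _ = p k (a k) * (∏ j ∈ (insert k s)ᶜ, p j (a j)) *
              |(∏ j ∈ s, p j (a j)) - ∏ j ∈ s, q j (a j)| +
              (∏ j ∈ (insert k s)ᶜ, p j (a j)) * (|p k (a k) - q k (a k)| *
                ∏ j ∈ s, q j (a j)) := by ring
      have hsum2 : ∑ a : ∀ i, A i, (∏ j ∈ (insert k s)ᶜ, p j (a j)) *
          (|p k (a k) - q k (a k)| * ∏ j ∈ s, q j (a j)) =
          ∑ b, |p k b - q k b| := by
        obtain ⟨g, hgdef⟩ : ∃ g : ∀ j : Fin n, A j → ℝ,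
            g = fun j b => if j ∈ s then q j b else
              if j = k then |p j b - q j b| else p j b := ⟨_, rfl⟩
        have hgk : ∀ b, g k b = |p k b - q k b| := by
          intro b; simp [hgdef, hk]
        have hgs : ∀ j ∈ s, ∀ b : A j, g j b = q j b := by
          intro j hj b; simp [hgdef, hj]
        have hgc : ∀ j : Fin n, j ∉ s → j ≠ k → ∀ b : A j, g j b = p j b := by
          intro j hjs hjk b; simp [hgdef, hjs, hjk]
        have hg : ∀ a : ∀ i, A i,
            (∏ j ∈ (insert k s)ᶜ, p j (a j)) *
              (|p k (a k) - q k (a k)| * ∏ j ∈ s, q j (a j)) =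
            ∏ j, g j (a j) := by
          intro a
          have split := Finset.prod_mul_prod_compl (insert k s)
            (fun j => g j (a j))
          rw [Finset.prod_insert hk] at split
          rw [← split, hgk (a k)]
          have e2 : (∏ j ∈ s, g j (a j)) = ∏ j ∈ s, q j (a j) :=
            Finset.prod_congr rfl fun j hj => hgs j hj (a j)
          have e3 : (∏ j ∈ (insert k s)ᶜ, g j (a j)) =
              ∏ j ∈ (insert k s)ᶜ, p j (a j) := by
            refine Finset.prod_congr rfl fun j hj => ?_
            have hj' := Finset.mem_compl.1 hj
            have hjs : j ∉ s := fun h => hj' (Finset.mem_insert_of_mem h)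
            have hjk : j ≠ k := fun h => hj' (h ▸ Finset.mem_insert_self k s)
            exact hgc j hjs hjk (a j)
          rw [e2, e3]
          ring
        rw [Finset.sum_congr rfl fun a _ => hg a, sum_pi_prod]
        have hone : ∀ j : Fin n, j ≠ k → (∑ b, g j b) = 1 := by
          intro j hjk
          by_cases hjs : j ∈ s
          · rw [Finset.sum_congr rfl fun b _ => hgs j hjs b]; exact hq1 j
          · rw [Finset.sum_congr rfl fun b _ => hgc j hjs hjk b]; exact hp1 j
        rw [Fintype.prod_eq_single k hone]
        exact Finset.sum_congr rfl fun b _ => hgk b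
      calc ∑ a : ∀ i, A i, (∏ j ∈ (insert k s)ᶜ, p j (a j)) *
            |(∏ j ∈ insert k s, p j (a j)) - ∏ j ∈ insert k s, q j (a j)|
          ≤ ∑ a : ∀ i, A i, ((∏ j ∈ sᶜ, p j (a j)) *
              |(∏ j ∈ s, p j (a j)) - ∏ j ∈ s, q j (a j)| +
            (∏ j ∈ (insert k s)ᶜ, p j (a j)) * (|p k (a k) - q k (a k)| *
              ∏ j ∈ s, q j (a j))) := Finset.sum_le_sum fun a _ => hstep a
        _ = (∑ a : ∀ i, A i, (∏ j ∈ sᶜ, p j (a j)) *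
              |(∏ j ∈ s, p j (a j)) - ∏ j ∈ s, q j (a j)|) +
            ∑ a : ∀ i, A i, (∏ j ∈ (insert k s)ᶜ, p j (a j)) *
              (|p k (a k) - q k (a k)| * ∏ j ∈ s, q j (a j)) :=
            Finset.sum_add_distrib
        _ ≤ (∑ j ∈ s, ∑ b, |p j b - q j b|) + ∑ b, |p k b - q k b| := by
            rw [hsum2]; exact add_le_add ih le_rfl
        _ = ∑ j ∈ insert k s, ∑ b, |p j b - q j b| := by
            rw [Finset.sum_insert hk]; ring
  have h := key Finset.univ
  simpa using h

lemma stateDist_nonneg (G : Game n S A) (hG : IsGame G)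
    {ρ : ℕ → S → (∀ i, A i) → ℝ} (hρ : ∀ t s a, 0 ≤ ρ t s a) :
    ∀ t s, 0 ≤ stateDist G ρ t s := by
  intro t
  induction t with
  | zero => exact hG.1
  | succ t ih =>
    intro s'
    refine Finset.sum_nonneg fun s _ => Finset.sum_nonneg fun a _ => ?_
    exact mul_nonneg (mul_nonneg (ih s) (hρ t s a)) ((hG.2.2.1 s a).1 s')

lemma abs_Vaux_le (G : Game n S A) (hG : IsGame G) (i : Fin n)
    {σ : ℕ → S → (∀ i, A i) → ℝ}
    (hσ0 : ∀ t s a, 0 ≤ σ t s a) (hσ1 : ∀ t s, ∑ a, σ t s a = 1) :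
    ∀ k t s, |Vaux G i σ k t s| ≤ (k : ℝ) := by
  intro k
  induction k with
  | zero => intro t s; simp [Vaux]
  | succ k ih =>
    intro t s
    have hq : ∀ a : ∀ i, A i,
        |G.r i t s a + ∑ s' : S, G.P s a s' * Vaux G i σ k (t + 1) s'| ≤
          (k : ℝ) + 1 := by
      intro a
      have h2 : |∑ s' : S, G.P s a s' * Vaux G i σ k (t + 1) s'| ≤ (k : ℝ) := by
        refine (Finset.abs_sum_le_sum_abs _ _).trans ?_
        have : ∀ s' : S, |G.P s a s' * Vaux G i σ k (t + 1) s'| ≤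
            G.P s a s' * (k : ℝ) := by
          intro s'
          rw [abs_mul, abs_of_nonneg ((hG.2.2.1 s a).1 s')]
          exact mul_le_mul_of_nonneg_left (ih (t + 1) s') ((hG.2.2.1 s a).1 s')
        refine (Finset.sum_le_sum fun s' _ => this s').trans ?_
        rw [← Finset.sum_mul, (hG.2.2.1 s a).2, one_mul]
      calc |G.r i t s a + ∑ s' : S, G.P s a s' * Vaux G i σ k (t + 1) s'| ≤
            |G.r i t s a| + |∑ s' : S, G.P s a s' * Vaux G i σ k (t + 1) s'| :=
            abs_add_le _ _
        _ ≤ 1 + (k : ℝ) := add_le_add (hG.2.2.2 i t s a) h2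
        _ = (k : ℝ) + 1 := by ring
    show |∑ a : ∀ i, A i, σ t s a *
        (G.r i t s a + ∑ s' : S, G.P s a s' * Vaux G i σ k (t + 1) s')| ≤ _
    refine (Finset.abs_sum_le_sum_abs _ _).trans ?_
    have hb : ∀ a : ∀ i, A i, |σ t s a *
        (G.r i t s a + ∑ s' : S, G.P s a s' * Vaux G i σ k (t + 1) s')| ≤
        σ t s a * ((k : ℝ) + 1) := by
      intro a
      rw [abs_mul, abs_of_nonneg (hσ0 t s a)]
      exact mul_le_mul_of_nonneg_left (hq a) (hσ0 t s a)
    refine (Finset.sum_le_sum fun a _ => hb a).trans ?_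
    rw [← Finset.sum_mul, hσ1 t s, one_mul]
    push_cast
    exact le_rfl

/-- The per-step expected total variation under the expert distribution. -/
noncomputable def tvT (G : Game n S A) (πE : ∀ i, ℕ → S → A i → ℝ)
    (σ : ℕ → S → (∀ i, A i) → ℝ) (t : ℕ) : ℝ :=
  ∑ s : S, stateDist G (joint πE) t s * ∑ a : ∀ i, A i, |σ t s a - joint πE t s a|

lemma tvT_nonneg (G : Game n S A) (hG : IsGame G)
    {πE : ∀ i, ℕ → S → A i → ℝ} (hE : ∀ i, IsPol (πE i))
    (σ : ℕ → S → (∀ i, A i) → ℝ) (t : ℕ) : 0 ≤ tvT G πE σ t := by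
  refine Finset.sum_nonneg fun s _ => mul_nonneg
    (stateDist_nonneg G hG (fun t s a => joint_nonneg hE t s a) t s)
    (Finset.sum_nonneg fun a _ => abs_nonneg _)

/-- Key simulation bound by induction on the remaining horizon. -/
lemma key_sim (G : Game n S A) (hG : IsGame G) (i : Fin n)
    {πE : ∀ i, ℕ → S → A i → ℝ} (hE : ∀ i, IsPol (πE i))
    {σ : ℕ → S → (∀ i, A i) → ℝ}
    (hσ0 : ∀ t s a, 0 ≤ σ t s a) (hσ1 : ∀ t s, ∑ a, σ t s a = 1) :
    ∀ k t, ∑ s : S, stateDist G (joint πE) t s *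
        |Vaux G i σ k t s - Vaux G i (joint πE) k t s| ≤
      (k : ℝ) * ∑ j ∈ Finset.range k, tvT G πE σ (t + j) := by
  intro k
  induction k with
  | zero => intro t; simp [Vaux]
  | succ k ih =>
    intro t
    set μ := stateDist G (joint πE) with hμdef
    have hμ0 : ∀ u s, 0 ≤ μ u s :=
      stateDist_nonneg G hG (fun u s a => joint_nonneg hE u s a)
    set τ := joint πE with hτdef
    have hτ0 : ∀ u s a, 0 ≤ τ u s a := fun u s a => joint_nonneg hE u s a
    have hτ1 : ∀ u s, ∑ a, τ u s a = 1 := fun u s => joint_sum_one hE u s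
    -- pointwise decomposition
    have hpt : ∀ s : S, Vaux G i σ (k + 1) t s - Vaux G i τ (k + 1) t s =
        (∑ a : ∀ i, A i, (σ t s a - τ t s a) *
          (G.r i t s a + ∑ s' : S, G.P s a s' * Vaux G i σ k (t + 1) s')) +
        ∑ a : ∀ i, A i, τ t s a * ∑ s' : S, G.P s a s' *
          (Vaux G i σ k (t + 1) s' - Vaux G i τ k (t + 1) s') := by
      intro s
      show (∑ a : ∀ i, A i, σ t s a *
          (G.r i t s a + ∑ s' : S, G.P s a s' * Vaux G i σ k (t + 1) s')) -
        (∑ a : ∀ i, A i, τ t s a *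
          (G.r i t s a + ∑ s' : S, G.P s a s' * Vaux G i τ k (t + 1) s')) = _
      rw [← Finset.sum_sub_distrib, ← Finset.sum_add_distrib]
      refine Finset.sum_congr rfl fun a _ => ?_
      have hinner : ∑ s' : S, G.P s a s' *
          (Vaux G i σ k (t + 1) s' - Vaux G i τ k (t + 1) s') =
          (∑ s' : S, G.P s a s' * Vaux G i σ k (t + 1) s') -
          ∑ s' : S, G.P s a s' * Vaux G i τ k (t + 1) s' := by
        rw [← Finset.sum_sub_distrib]
        exact Finset.sum_congr rfl fun s' _ => by ring
      rw [hinner]; ring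
    -- bound each state term
    have hA : ∀ s : S, |∑ a : ∀ i, A i, (σ t s a - τ t s a) *
        (G.r i t s a + ∑ s' : S, G.P s a s' * Vaux G i σ k (t + 1) s')| ≤
        ((k : ℝ) + 1) * ∑ a : ∀ i, A i, |σ t s a - τ t s a| := by
      intro s
      refine (Finset.abs_sum_le_sum_abs _ _).trans ?_
      rw [Finset.mul_sum]
      refine Finset.sum_le_sum fun a _ => ?_
      rw [abs_mul]
      have hq : |G.r i t s a + ∑ s' : S, G.P s a s' * Vaux G i σ k (t + 1) s'| ≤
          (k : ℝ) + 1 := by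
        have h2 : |∑ s' : S, G.P s a s' * Vaux G i σ k (t + 1) s'| ≤ (k : ℝ) := by
          refine (Finset.abs_sum_le_sum_abs _ _).trans ?_
          have hb : ∀ s' : S, |G.P s a s' * Vaux G i σ k (t + 1) s'| ≤
              G.P s a s' * (k : ℝ) := by
            intro s'
            rw [abs_mul, abs_of_nonneg ((hG.2.2.1 s a).1 s')]
            exact mul_le_mul_of_nonneg_left
              (abs_Vaux_le G hG i hσ0 hσ1 k (t + 1) s') ((hG.2.2.1 s a).1 s')
          refine (Finset.sum_le_sum fun s' _ => hb s').trans ?_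
          rw [← Finset.sum_mul, (hG.2.2.1 s a).2, one_mul]
        calc |G.r i t s a + ∑ s' : S, G.P s a s' * Vaux G i σ k (t + 1) s'| ≤
              |G.r i t s a| + _ := abs_add_le _ _
          _ ≤ 1 + (k : ℝ) := add_le_add (hG.2.2.2 i t s a) h2
          _ = (k : ℝ) + 1 := by ring
      calc |σ t s a - τ t s a| *
            |G.r i t s a + ∑ s' : S, G.P s a s' * Vaux G i σ k (t + 1) s'| ≤
            |σ t s a - τ t s a| * ((k : ℝ) + 1) :=
            mul_le_mul_of_nonneg_left hq (abs_nonneg _)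
        _ = ((k : ℝ) + 1) * |σ t s a - τ t s a| := by ring
    have hB : ∀ s : S, |∑ a : ∀ i, A i, τ t s a * ∑ s' : S, G.P s a s' *
        (Vaux G i σ k (t + 1) s' - Vaux G i τ k (t + 1) s')| ≤
        ∑ a : ∀ i, A i, τ t s a * ∑ s' : S, G.P s a s' *
          |Vaux G i σ k (t + 1) s' - Vaux G i τ k (t + 1) s'| := by
      intro s
      refine (Finset.abs_sum_le_sum_abs _ _).trans ?_
      refine Finset.sum_le_sum fun a _ => ?_
      rw [abs_mul, abs_of_nonneg (hτ0 t s a)]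
      refine mul_le_mul_of_nonneg_left ?_ (hτ0 t s a)
      refine (Finset.abs_sum_le_sum_abs _ _).trans ?_
      refine Finset.sum_le_sum fun s' _ => ?_
      rw [abs_mul, abs_of_nonneg ((hG.2.2.1 s a).1 s')]
    -- the transported term equals the next state distribution expectation
    have htrans : ∑ s : S, μ t s * ∑ a : ∀ i, A i, τ t s a * ∑ s' : S, G.P s a s' *
        |Vaux G i σ k (t + 1) s' - Vaux G i τ k (t + 1) s'| =
        ∑ s' : S, μ (t + 1) s' *
          |Vaux G i σ k (t + 1) s' - Vaux G i τ k (t + 1) s'| := by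
      have hf : ∀ s' : S, μ (t + 1) s' = ∑ s : S, ∑ a : ∀ i, A i,
          μ t s * τ t s a * G.P s a s' := fun s' => rfl
      simp only [hf, Finset.sum_mul, Finset.mul_sum]
      conv_rhs => rw [Finset.sum_comm]
      refine Finset.sum_congr rfl fun s _ => ?_
      conv_rhs => rw [Finset.sum_comm]
      refine Finset.sum_congr rfl fun a _ => ?_
      refine Finset.sum_congr rfl fun s' _ => ?_
      ring
    have step : ∑ s : S, μ t s *
        |Vaux G i σ (k + 1) t s - Vaux G i τ (k + 1) t s| ≤
        ((k : ℝ) + 1) * tvT G πE σ t +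
        ∑ s' : S, μ (t + 1) s' *
          |Vaux G i σ k (t + 1) s' - Vaux G i τ k (t + 1) s'| := by
      rw [← htrans]
      have h1 : ∀ s : S, μ t s *
          |Vaux G i σ (k + 1) t s - Vaux G i τ (k + 1) t s| ≤
          μ t s * (((k : ℝ) + 1) * ∑ a : ∀ i, A i, |σ t s a - τ t s a|) +
          μ t s * ∑ a : ∀ i, A i, τ t s a * ∑ s' : S, G.P s a s' *
            |Vaux G i σ k (t + 1) s' - Vaux G i τ k (t + 1) s'| := by
        intro s
        rw [← mul_add]
        refine mul_le_mul_of_nonneg_left ?_ (hμ0 t s)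
        rw [hpt s]
        exact (abs_add_le _ _).trans (add_le_add (hA s) (hB s))
      refine (Finset.sum_le_sum fun s _ => h1 s).trans ?_
      rw [Finset.sum_add_distrib]
      refine add_le_add ?_ le_rfl
      rw [tvT, Finset.mul_sum]
      refine le_of_eq (Finset.sum_congr rfl fun s _ => ?_)
      ring
    refine step.trans ?_
    have hIH := ih (t + 1)
    have htv0 : ∀ u, 0 ≤ tvT G πE σ u := tvT_nonneg G hG hE σ
    have hsum : ∑ j ∈ Finset.range (k + 1), tvT G πE σ (t + j) =
        tvT G πE σ t + ∑ j ∈ Finset.range k, tvT G πE σ (t + 1 + j) := by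
      rw [Finset.sum_range_succ']
      have : ∀ j, tvT G πE σ (t + (j + 1)) = tvT G πE σ (t + 1 + j) := by
        intro j; congr 1; omega
      simp only [this, add_zero]
      ring
    rw [hsum]
    have hk1 : (0 : ℝ) ≤ (k : ℝ) + 1 := by positivity
    have h2 : ∑ s' : S, μ (t + 1) s' *
        |Vaux G i σ k (t + 1) s' - Vaux G i τ k (t + 1) s'| ≤
        ((k : ℝ) + 1) * ∑ j ∈ Finset.range k, tvT G πE σ (t + 1 + j) := by
      refine hIH.trans ?_
      refine mul_le_mul_of_nonneg_right (by norm_num) ?_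
      exact Finset.sum_nonneg fun j _ => htv0 _
    push_cast
    nlinarith [htv0 t, Finset.sum_nonneg fun j (_ : j ∈ Finset.range k) =>
      htv0 (t + 1 + j)]

/-- Per-step TV of a product policy is at most `n · εBC`. -/
lemma tvT_le (G : Game n S A) (hG : IsGame G)
    {πE ρ : ∀ i, ℕ → S → A i → ℝ} (hE : ∀ i, IsPol (πE i))
    (hρ : ∀ i, IsPol (ρ i)) (εBC : ℝ) (t : ℕ)
    (h : ∀ j : Fin n, ∑ s : S, stateDist G (joint πE) t s *
      ∑ b, |ρ j t s b - πE j t s b| ≤ εBC) :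
    tvT G πE (joint ρ) t ≤ (n : ℝ) * εBC := by
  have hμ0 : ∀ s, 0 ≤ stateDist G (joint πE) t s := fun s =>
    stateDist_nonneg G hG (fun u s a => joint_nonneg hE u s a) t s
  have h1 : tvT G πE (joint ρ) t ≤ ∑ s : S, stateDist G (joint πE) t s *
      ∑ j : Fin n, ∑ b, |ρ j t s b - πE j t s b| := by
    refine Finset.sum_le_sum fun s _ => mul_le_mul_of_nonneg_left ?_ (hμ0 s)
    exact tv_prod_le (fun j => ρ j t s) (fun j => πE j t s)
      (fun j b => (hρ j).1 t s b) (fun j b => (hE j).1 t s b)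
      (fun j => (hρ j).2 t s) (fun j => (hE j).2 t s)
  refine h1.trans ?_
  have h2 : ∑ s : S, stateDist G (joint πE) t s *
      ∑ j : Fin n, ∑ b, |ρ j t s b - πE j t s b| =
      ∑ j : Fin n, ∑ s : S, stateDist G (joint πE) t s *
        ∑ b, |ρ j t s b - πE j t s b| := by
    rw [Finset.sum_comm]
    exact Finset.sum_congr rfl fun s _ => Finset.mul_sum _ _ _
  rw [h2]
  calc ∑ j : Fin n, ∑ s : S, stateDist G (joint πE) t s *
        ∑ b, |ρ j t s b - πE j t s b| ≤ ∑ _j : Fin n, εBC :=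
        Finset.sum_le_sum fun j _ => h j
    _ = (n : ℝ) * εBC := by simp [mul_comm]

/-- Values of two product policies close to the expert are close. -/
lemma value_close (G : Game n S A) (hG : IsGame G) (i : Fin n)
    (πE ρ : ∀ i, ℕ → S → A i → ℝ)
    (hE : ∀ j, IsPol (πE j)) (hρ : ∀ j, IsPol (ρ j)) (εBC : ℝ)
    (h : ∀ j : Fin n, ∀ t < G.H, ∑ s : S, stateDist G (joint πE) t s *
      ∑ b, |ρ j t s b - πE j t s b| ≤ εBC) :
    |value G i (joint ρ) - value G i (joint πE)| ≤
      (n : ℝ) * εBC * (G.H : ℝ) ^ 2 := by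
  have hμ0 : ∀ t s, 0 ≤ stateDist G (joint πE) t s :=
    stateDist_nonneg G hG (fun u s a => joint_nonneg hE u s a)
  have hval : value G i (joint ρ) - value G i (joint πE) =
      ∑ s : S, G.ν₀ s * (Vaux G i (joint ρ) G.H 0 s -
        Vaux G i (joint πE) G.H 0 s) := by
    unfold value Vt
    rw [← Finset.sum_sub_distrib]
    exact Finset.sum_congr rfl fun s _ => by rw [Nat.sub_zero]; ring
  rw [hval]
  have h0 : ∀ s : S, G.ν₀ s = stateDist G (joint πE) 0 s := fun s => rfl
  calc |∑ s : S, G.ν₀ s * (Vaux G i (joint ρ) G.H 0 s -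
        Vaux G i (joint πE) G.H 0 s)|
      ≤ ∑ s : S, |G.ν₀ s * (Vaux G i (joint ρ) G.H 0 s -
        Vaux G i (joint πE) G.H 0 s)| := Finset.abs_sum_le_sum_abs _ _
    _ = ∑ s : S, stateDist G (joint πE) 0 s * |Vaux G i (joint ρ) G.H 0 s -
        Vaux G i (joint πE) G.H 0 s| := by
        refine Finset.sum_congr rfl fun s _ => ?_
        rw [abs_mul, h0 s, abs_of_nonneg (hμ0 0 s)]
    _ ≤ (G.H : ℝ) * ∑ j ∈ Finset.range G.H, tvT G πE (joint ρ) (0 + j) :=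
        key_sim G hG i hE (fun t s a => joint_nonneg hρ t s a)
          (fun t s => joint_sum_one hρ t s) G.H 0
    _ ≤ (G.H : ℝ) * ∑ _j ∈ Finset.range G.H, (n : ℝ) * εBC := by
        refine mul_le_mul_of_nonneg_left ?_ (by positivity)
        refine Finset.sum_le_sum fun j hj => ?_
        have hjH : 0 + j < G.H := by
          simpa using Finset.mem_range.1 hj
        exact tvT_le G hG hE hρ εBC (0 + j) (fun l => h l (0 + j) hjH)
    _ = (n : ℝ) * εBC * (G.H : ℝ) ^ 2 := by
        rw [Finset.sum_const, Finset.card_range]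
        rw [nsmul_eq_mul]
        ring

/-- finite-horizon DSE bound: if `π^E` is a weak Dominant Strategy
Equilibrium and `π` has time-uniform BC error `ε_BC`, then
`NashGap(π) ≤ 2 n ε_BC H²`. -/
theorem dse_nash_gap_finite {n : ℕ} {S : Type} {A : Fin n → Type}
    [Fintype S] [∀ i, Fintype (A i)]
    (G : Game n S A) (hG : IsGame G)
    (πE π : ∀ i, ℕ → S → A i → ℝ)
    (hE : ∀ i, IsPol (πE i)) (hπ : ∀ i, IsPol (π i))
    (hDSE : ∀ (i : Fin n) (ρ : ∀ j, ℕ → S → A j → ℝ), (∀ j, IsPol (ρ j)) →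
      value G i (joint ρ) ≤ value G i (joint (dev ρ i (πE i))))
    (εBC : ℝ) (hBC : ∀ (i : Fin n), ∀ t < G.H, bcErrT G πE π i t ≤ εBC) :
    ∀ (i : Fin n) (πi' : ℕ → S → A i → ℝ), IsPol πi' →
      value G i (joint (dev π i πi')) - value G i (joint π) ≤
        2 * n * εBC * (G.H : ℝ) ^ 2 := by
  intro i πi' hπi'
  have hρ : ∀ j, IsPol (dev π i πi' j) := by
    intro j
    rcases eq_or_ne j i with rfl | hji
    · simpa [dev] using hπi'
    · simpa [dev, Function.update_of_ne hji] using hπ j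
  have hE' : ∀ j, IsPol (dev π i (πE i) j) := by
    intro j
    rcases eq_or_ne j i with rfl | hji
    · simpa [dev] using hE j
    · simpa [dev, Function.update_of_ne hji] using hπ j
  -- Step 1: DSE
  have h1 : value G i (joint (dev π i πi')) ≤
      value G i (joint (dev π i (πE i))) := by
    have := hDSE i (dev π i πi') hρ
    have heq : dev (dev π i πi') i (πE i) = dev π i (πE i) :=
      Function.update_idem _ _ _
    rwa [heq] at this
  -- Step 2: closeness of both policies to the expert
  have hbcπ : ∀ j : Fin n, ∀ t < G.H, ∑ s : S, stateDist G (joint πE) t s *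
      ∑ b, |π j t s b - πE j t s b| ≤ εBC := fun j t ht => hBC j t ht
  have hεnn : ∀ t < G.H, (0 : ℝ) ≤ εBC := by
    intro t ht
    refine le_trans ?_ (hBC i t ht)
    unfold bcErrT
    refine Finset.sum_nonneg fun s _ => mul_nonneg
      (stateDist_nonneg G hG (fun u s a => joint_nonneg hE u s a) t s)
      (Finset.sum_nonneg fun b _ => abs_nonneg _)
  have hbcE : ∀ j : Fin n, ∀ t < G.H, ∑ s : S, stateDist G (joint πE) t s *
      ∑ b, |dev π i (πE i) j t s b - πE j t s b| ≤ εBC := by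
    intro j t ht
    rcases eq_or_ne j i with rfl | hji
    · simpa [dev] using hεnn t ht
    · simpa [dev, bcErrT, Function.update_of_ne hji] using hBC j t ht
  have h2 := value_close G hG i πE (dev π i (πE i)) hE hE' εBC hbcE
  have h3 := value_close G hG i πE π hE hπ εBC hbcπ
  have h2' := abs_le.1 h2
  have h3' := abs_le.1 h3
  calc value G i (joint (dev π i πi')) - value G i (joint π)
      ≤ value G i (joint (dev π i (πE i))) - value G i (joint π) := by
        linarith
    _ = (value G i (joint (dev π i (πE i))) - value G i (joint πE)) +
        (value G i (joint πE) - value G i (joint π)) := by ring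
    _ ≤ (n : ℝ) * εBC * (G.H : ℝ) ^ 2 + (n : ℝ) * εBC * (G.H : ℝ) ^ 2 := by
        linarith [h2'.2, h3'.1]
    _ = 2 * n * εBC * (G.H : ℝ) ^ 2 := by ring

end FH
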